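/- If (μ₁,…,μ_N) is a step C-compatible tuple, i.e., Σ_k 𝔼(μ_k) = C and μ_k = α_k λ[l_k,p_k] + (1−α_k) λ[l_k,r_k] with (l⃗,r⃗) a C-compatible boundary, l_k ≤ p_k ≤ r_k and 0 < α_k < 1, then C ≤ Σ_k (l_k + r_k)/2; moreover if equality holds then p_k = r_k and μ_k = λ[l_k,r_k] for all k. -/

import Mathlib

open MeasureTheory

/-- `μ ∈ D[l,r]`: `μ = α·δ_l + ρ(x)dx` where `ρ` is nonnegative, nonincreasing on `[l,r]`
and vanishes outside `[l,r]` (the absolutely continuous part has total mass `1 − α`). -/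
def memD (l r : ℝ) (μ : Measure ℝ) : Prop :=
  ∃ α : ℝ, 0 ≤ α ∧ α ≤ 1 ∧ ∃ ρ : ℝ → ℝ,
    (∀ x, 0 ≤ ρ x) ∧ AntitoneOn ρ (Set.Icc l r) ∧ (∀ x ∉ Set.Icc l r, ρ x = 0) ∧
    μ = (ENNReal.ofReal α) • Measure.dirac l
          + volume.withDensity (fun x => ENNReal.ofReal (ρ x))

/-- `μ ∈ D_AC[l,r]`: `μ = ρ(x)dx` with `ρ` nonnegative, nonincreasing on `[l,r]`, vanishing
outside `[l,r]`. -/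
def memDAC (l r : ℝ) (μ : Measure ℝ) : Prop :=
  ∃ ρ : ℝ → ℝ,
    (∀ x, 0 ≤ ρ x) ∧ AntitoneOn ρ (Set.Icc l r) ∧ (∀ x ∉ Set.Icc l r, ρ x = 0) ∧
    μ = volume.withDensity (fun x => ENNReal.ofReal (ρ x))

/-- `λ[l,t]`: normalized Lebesgue measure on `[l,t]` for `l < t`, and `δ_l` for `t = l`. -/
noncomputable def lam (l t : ℝ) : Measure ℝ :=
  if l < t then (ENNReal.ofReal (t - l))⁻¹ • volume.restrict (Set.Icc l t)
  else Measure.dirac l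


/-- A pair of N-tuples (l, r) is a C-compatible boundary if 0 ≤ r_k − l_k ≤ C − Σᵢ lᵢ. -/
def CompatBoundary {N : ℕ} (C : ℝ) (l r : Fin N → ℝ) : Prop :=
  ∀ k, 0 ≤ r k - l k ∧ r k - l k ≤ C - ∑ i, l i

/-- The tuple μ belongs to V^N[C]: Σ 𝔼(μ_k) = C and μ_k ∈ D[l_k,r_k] for some C-compatible
boundary (l,r). -/
def memV {N : ℕ} (C : ℝ) (μ : Fin N → MeasureTheory.Measure ℝ) : Prop :=
  (∑ k, ∫ x, x ∂(μ k)) = C ∧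
  ∃ l r : Fin N → ℝ, CompatBoundary C l r ∧ ∀ k, memD (l k) (r k) (μ k)


lemma integrable_id_lam' (l t : ℝ) : Integrable (fun x : ℝ => x) (lam l t) := by
  unfold lam
  split_ifs with h
  · refine Integrable.smul_measure ?_ (ENNReal.inv_ne_top.mpr ?_)
    · exact (continuous_id.integrableOn_Icc)
    · exact (ENNReal.ofReal_pos.mpr (by linarith)).ne'
  · exact (integrable_const l).congr (ae_eq_dirac (fun x : ℝ => x)).symm

lemma integral_lam' (l t : ℝ) (h : l ≤ t) : ∫ x, x ∂(lam l t) = (l + t) / 2 := by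
  unfold lam
  split_ifs with hlt
  · rw [integral_smul_measure]
    have h1 : ∫ x in Set.Icc l t, x = (t^2 - l^2)/2 := by
      rw [MeasureTheory.integral_Icc_eq_integral_Ioc,
        ← intervalIntegral.integral_of_le h]
      simp [integral_id]
    rw [h1, ENNReal.toReal_inv, ENNReal.toReal_ofReal (by linarith)]
    have ht : t - l ≠ 0 := by intro hc; linarith
    field_simp
    rw [smul_eq_mul, show (t^2 - l^2)/2 = (t-l)*((l+t)/2) by ring, ← mul_assoc (1/(t-l)),
      one_div_mul_cancel ht, one_mul]
    ring
  · have : l = t := le_antisymm h (not_lt.mp hlt)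
    subst this
    rw [integral_dirac]
    ring

/-- a step C-compatible tuple satisfies C ≤ Σ (l_k+r_k)/2, and if equality
holds then p_k = r_k and μ_k = λ[l_k,r_k] for all k. -/
theorem stmt13 {N : ℕ} (C : ℝ) (l r p α : Fin N → ℝ) (μ : Fin N → Measure ℝ)
    (hb : CompatBoundary C l r)
    (hp : ∀ k, l k ≤ p k ∧ p k ≤ r k) (hα : ∀ k, 0 < α k ∧ α k < 1)
    (hμ : ∀ k, μ k = ENNReal.ofReal (α k) • lam (l k) (p k)
                    + ENNReal.ofReal (1 - α k) • lam (l k) (r k))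
    (hE : (∑ k, ∫ x, x ∂(μ k)) = C) :
    C ≤ ∑ k, (l k + r k) / 2 ∧
      (C = ∑ k, (l k + r k) / 2 → ∀ k, p k = r k ∧ μ k = lam (l k) (r k)) := by
  have hlr : ∀ k, l k ≤ r k := fun k => by have := (hb k).1; linarith
  have hint : ∀ k, ∫ x, x ∂(μ k)
      = α k * ((l k + p k) / 2) + (1 - α k) * ((l k + r k) / 2) := by
    intro k
    rw [hμ k, integral_add_measure
        ((integrable_id_lam' (l k) (p k)).smul_measure ENNReal.ofReal_ne_top)
        ((integrable_id_lam' (l k) (r k)).smul_measure ENNReal.ofReal_ne_top),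
      integral_smul_measure, integral_smul_measure,
      integral_lam' _ _ (hp k).1, integral_lam' _ _ (hlr k),
      ENNReal.toReal_ofReal (hα k).1.le,
      ENNReal.toReal_ofReal (by have := (hα k).2; linarith)]
    simp [smul_eq_mul]
  have hle : ∀ k ∈ Finset.univ, (∫ x, x ∂(μ k)) ≤ (l k + r k) / 2 := by
    intro k _
    rw [hint k]
    nlinarith [mul_nonneg (hα k).1.le (sub_nonneg.mpr (hp k).2)]
  have h1 : C ≤ ∑ k, (l k + r k) / 2 := by
    rw [← hE]; exact Finset.sum_le_sum hle
  refine ⟨h1, fun hCeq k => ?_⟩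
  have heq : (∫ x, x ∂(μ k)) = (l k + r k) / 2 :=
    (Finset.sum_eq_sum_iff_of_le hle).mp (hE.trans hCeq) k (Finset.mem_univ k)
  rw [hint k] at heq
  have hpr : p k = r k := by
    have hαpos := (hα k).1
    nlinarith [sub_nonneg.mpr (hp k).2]
  refine ⟨hpr, ?_⟩
  rw [hμ k, hpr, ← add_smul, ← ENNReal.ofReal_add (hα k).1.le (by have := (hα k).2; linarith)]
  norm_num
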